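/- The support function of the tangent cone of an ordered partition equals the Lovász extension on compatible vectors and is +∞ otherwise: sup_{s ∈ B̂^𝒜(F)} wᵀs = f(w) if w ∈ 𝒲^𝒜, and = +∞ otherwise. -/

import Mathlib

open Finset

/-- A set function on subsets of `Fin n` is submodular. -/
def Submodular {n : ℕ} (F : Finset (Fin n) → ℝ) : Prop :=
  ∀ A B : Finset (Fin n), F (A ∪ B) + F (A ∩ B) ≤ F A + F B

/-- The Lovász extension of a set function, via a permutation sorting `w` decreasingly. -/
noncomputable def lovasz {n : ℕ} (F : Finset (Fin n) → ℝ) (w : Fin n → ℝ) : ℝ :=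
  let σ := Tuple.sort (fun i => -w i)
  ∑ k : Fin n, w (σ k) *
    (F ((Finset.Iic k).image σ) - F ((Finset.Iio k).image σ))

/-- The base polytope of a set function. -/
def basePolytope {n : ℕ} (F : Finset (Fin n) → ℝ) : Set (Fin n → ℝ) :=
  {s | (∑ i, s i) = F Finset.univ ∧
    ∀ A : Finset (Fin n), (∑ i ∈ A, s i) ≤ F A}

/-- `B i = A 0 ∪ ... ∪ A i` : prefix union of an ordered partition. -/
def prefixUnion {n m : ℕ} (A : Fin m → Finset (Fin n)) (i : Fin m) : Finset (Fin n) :=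
  (Finset.Iic i).biUnion A

/-- `B (i-1) = A 0 ∪ ... ∪ A (i-1)` : strict prefix union. -/
def prefixUnion' {n m : ℕ} (A : Fin m → Finset (Fin n)) (i : Fin m) : Finset (Fin n) :=
  (Finset.Iio i).biUnion A

/-- `A` is an ordered partition of the ground set `Fin n` into nonempty parts. -/
def IsOrderedPartition {n m : ℕ} (A : Fin m → Finset (Fin n)) : Prop :=
  (∀ i, (A i).Nonempty) ∧ (∀ i j, i ≠ j → Disjoint (A i) (A j)) ∧
    Finset.univ.biUnion A = Finset.univ

/-- The tangent cone (outer approximation of the base polytope) associated with an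
ordered partition: only the prefix-union constraints `s(B i) ≤ F(B i)`, `i < m-1`,
together with `s(V) = F(V)`. -/
def tangentCone {n m : ℕ} (F : Finset (Fin n) → ℝ) (A : Fin m → Finset (Fin n)) :
    Set (Fin n → ℝ) :=
  {s | (∑ i, s i) = F Finset.univ ∧
    ∀ i : Fin m, (i : ℕ) < m - 1 →
      (∑ j ∈ prefixUnion A i, s j) ≤ F (prefixUnion A i)}

/-- Vectors compatible with an ordered partition. -/
def compatible {n m : ℕ} (A : Fin m → Finset (Fin n)) : Set (Fin n → ℝ) :=
  {w | ∃ v : Fin m → ℝ, (∀ i j : Fin m, i ≤ j → v j ≤ v i) ∧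
    w = fun p => ∑ i, if p ∈ A i then v i else 0}

/-! ### Auxiliary material -/

noncomputable def greedy {n : ℕ} (F : Finset (Fin n) → ℝ) (σ : Equiv.Perm (Fin n)) : Fin n → ℝ :=
  fun p => F ((Finset.Iic (σ.symm p)).image σ) - F ((Finset.Iio (σ.symm p)).image σ)

def pref {n : ℕ} (σ : Equiv.Perm (Fin n)) (j : ℕ) : Finset (Fin n) :=
  (Finset.univ.filter (fun i : Fin n => (i:ℕ) < j)).image σ

lemma pref_zero {n : ℕ} (σ : Equiv.Perm (Fin n)) : pref σ 0 = ∅ := by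
  simp [pref]

lemma pref_top {n : ℕ} (σ : Equiv.Perm (Fin n)) : pref σ n = Finset.univ := by
  have : Finset.univ.filter (fun i : Fin n => (i:ℕ) < n) = Finset.univ :=
    Finset.filter_true_of_mem (fun i _ => i.isLt)
  rw [pref, this]
  exact Finset.image_univ_equiv σ

lemma Iio_image {n : ℕ} (σ : Equiv.Perm (Fin n)) (a : Fin n) :
    (Finset.Iio a).image σ = pref σ a := by
  congr 1; ext x
  simp only [Finset.mem_Iio, Finset.mem_filter, Finset.mem_univ, true_and]
  exact Iff.rfl

lemma Iic_image {n : ℕ} (σ : Equiv.Perm (Fin n)) (a : Fin n) :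
    (Finset.Iic a).image σ = pref σ (a + 1) := by
  congr 1; ext x
  simp only [Finset.mem_Iic, Finset.mem_filter, Finset.mem_univ, true_and, Nat.lt_succ_iff]
  exact Fin.le_def

lemma not_mem_pref {n : ℕ} (σ : Equiv.Perm (Fin n)) (a : Fin n) : σ a ∉ pref σ (a : ℕ) := by
  simp only [pref, Finset.mem_image, Finset.mem_filter]
  rintro ⟨x, ⟨-, hx⟩, hxa⟩
  exact absurd (σ.injective hxa ▸ hx) (lt_irrefl _)

lemma pref_succ {n : ℕ} (σ : Equiv.Perm (Fin n)) (a : Fin n) :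
    pref σ ((a : ℕ) + 1) = insert (σ a) (pref σ (a:ℕ)) := by
  unfold pref
  rw [← Finset.image_insert]
  congr 1; ext x
  simp only [Finset.mem_filter, Finset.mem_univ, true_and, Finset.mem_insert, Nat.lt_succ_iff]
  constructor
  · intro h
    rcases eq_or_lt_of_le h with h | h
    · exact Or.inl (Fin.ext h)
    · exact Or.inr h
  · rintro (rfl | h)
    · exact le_refl _
    · exact le_of_lt h

lemma greedy_apply {n : ℕ} (F : Finset (Fin n) → ℝ) (σ : Equiv.Perm (Fin n)) (a : Fin n) :
    greedy F σ (σ a) = F (pref σ ((a:ℕ) + 1)) - F (pref σ (a:ℕ)) := by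
  simp only [greedy, Equiv.symm_apply_apply, Iio_image, Iic_image]

/-- greedy point partial sums are at most F. -/
lemma greedy_sum_le {n : ℕ} {F : Finset (Fin n) → ℝ} (hF : Submodular F) (hF0 : F ∅ = 0)
    (σ : Equiv.Perm (Fin n)) (C : Finset (Fin n)) :
    ∑ p ∈ C, greedy F σ p ≤ F C := by
  have key : ∀ a : Fin n, (if σ a ∈ C then greedy F σ (σ a) else 0) ≤
      F (pref σ ((a:ℕ)+1) ∩ C) - F (pref σ (a:ℕ) ∩ C) := by
    intro a
    by_cases h : σ a ∈ C
    · rw [if_pos h, greedy_apply]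
      have hne : σ a ∉ pref σ (a:ℕ) := not_mem_pref σ a
      have h1 : pref σ (a:ℕ) ∪ insert (σ a) (pref σ (a:ℕ) ∩ C) = pref σ ((a:ℕ)+1) := by
        rw [pref_succ]
        ext x
        simp only [Finset.mem_union, Finset.mem_insert, Finset.mem_inter]
        tauto
      have h2 : pref σ (a:ℕ) ∩ insert (σ a) (pref σ (a:ℕ) ∩ C) = pref σ (a:ℕ) ∩ C := by
        ext x
        simp only [Finset.mem_inter, Finset.mem_insert]
        constructor
        · rintro ⟨hx, (rfl | ⟨_, hc⟩)⟩
          · exact absurd hx hne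
          · exact ⟨hx, hc⟩
        · rintro ⟨hx, hc⟩; exact ⟨hx, Or.inr ⟨hx, hc⟩⟩
      have h3 : pref σ ((a:ℕ)+1) ∩ C = insert (σ a) (pref σ (a:ℕ) ∩ C) := by
        rw [pref_succ]
        ext x
        simp only [Finset.mem_inter, Finset.mem_insert]
        constructor
        · rintro ⟨(rfl | hx), hc⟩
          · exact Or.inl rfl
          · exact Or.inr ⟨hx, hc⟩
        · rintro (rfl | ⟨hx, hc⟩)
          · exact ⟨Or.inl rfl, h⟩
          · exact ⟨Or.inr hx, hc⟩
      have := hF (pref σ (a:ℕ)) (insert (σ a) (pref σ (a:ℕ) ∩ C))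
      rw [h1, h2] at this
      rw [h3]
      linarith
    · rw [if_neg h]
      have : pref σ ((a:ℕ)+1) ∩ C = pref σ (a:ℕ) ∩ C := by
        rw [pref_succ]
        ext x
        simp only [Finset.mem_inter, Finset.mem_insert]
        constructor
        · rintro ⟨(rfl | hx), hc⟩
          · exact absurd hc h
          · exact ⟨hx, hc⟩
        · rintro ⟨hx, hc⟩; exact ⟨Or.inr hx, hc⟩
      rw [this]
      simp
  calc ∑ p ∈ C, greedy F σ p = ∑ p : Fin n, (if p ∈ C then greedy F σ p else 0) := by
        rw [Finset.sum_ite_mem, Finset.univ_inter]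
    _ = ∑ a : Fin n, (if σ a ∈ C then greedy F σ (σ a) else 0) :=
        (Equiv.sum_comp σ _).symm
    _ ≤ ∑ a : Fin n, (F (pref σ ((a:ℕ)+1) ∩ C) - F (pref σ (a:ℕ) ∩ C)) :=
        Finset.sum_le_sum (fun a _ => key a)
    _ = ∑ j ∈ Finset.range n, (F (pref σ (j+1) ∩ C) - F (pref σ j ∩ C)) :=
        Fin.sum_univ_eq_sum_range (fun j => F (pref σ (j+1) ∩ C) - F (pref σ j ∩ C)) n
    _ = F (pref σ n ∩ C) - F (pref σ 0 ∩ C) := Finset.sum_range_sub (fun j => F (pref σ j ∩ C)) n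
    _ = F C := by rw [pref_top, pref_zero, Finset.univ_inter, Finset.empty_inter, hF0]; ring

lemma lower_eq_init {n : ℕ} (L : Finset (Fin n))
    (hL : ∀ a ∈ L, ∀ b : Fin n, b ≤ a → b ∈ L) :
    L = Finset.univ.filter (fun a : Fin n => (a:ℕ) < L.card) := by
  ext a
  simp only [Finset.mem_filter, Finset.mem_univ, true_and]
  constructor
  · intro ha
    have hsub : Finset.Iic a ⊆ L := fun b hb => hL a ha b (Finset.mem_Iic.mp hb)
    have := Finset.card_le_card hsub
    rw [Fin.card_Iic] at this
    omega
  · intro ha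
    by_contra h
    have hsub : L ⊆ Finset.Iio a := by
      intro x hx
      rw [Finset.mem_Iio]
      by_contra hax
      exact h (hL x hx a (not_lt.mp hax))
    have := Finset.card_le_card hsub
    rw [Fin.card_Iio] at this
    omega

lemma greedy_sum_sep {n : ℕ} (F : Finset (Fin n) → ℝ) (hF0 : F ∅ = 0) (w : Fin n → ℝ)
    (B : Finset (Fin n)) (hsep : ∀ p ∈ B, ∀ q ∉ B, w q < w p) :
    ∑ p ∈ B, greedy F (Tuple.sort (fun i => -w i)) p = F B := by
  set σ := Tuple.sort (fun i => -w i) with hσ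
  have hmono : ∀ a b : Fin n, a ≤ b → w (σ b) ≤ w (σ a) := by
    intro a b hab
    have := Tuple.monotone_sort (fun i => -w i) hab
    simpa using this
  set T : Finset (Fin n) := B.image σ.symm with hT
  have hmemT : ∀ a : Fin n, a ∈ T ↔ σ a ∈ B := by
    intro a
    simp only [hT, Finset.mem_image]
    constructor
    · rintro ⟨p, hp, rfl⟩; simpa using hp
    · intro h; exact ⟨σ a, h, by simp⟩
  have hlow : ∀ a ∈ T, ∀ b : Fin n, b ≤ a → b ∈ T := by
    intro a ha b hba
    rw [hmemT] at ha ⊢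
    by_contra hb
    exact absurd (hmono b a hba) (not_le.mpr (hsep (σ a) ha (σ b) hb))
  have hcard : T.card = B.card := Finset.card_image_of_injective _ σ.symm.injective
  have hTinit : T = Finset.univ.filter (fun a : Fin n => (a:ℕ) < B.card) := by
    rw [← hcard]; exact lower_eq_init T hlow
  have hBpref : B = pref σ B.card := by
    rw [pref, ← hTinit, hT, Finset.image_image]
    simp
  have hcn : B.card ≤ n := by simpa using Finset.card_le_card (Finset.subset_univ B)
  have hsum : ∑ a ∈ T, greedy F σ (σ a) = ∑ p ∈ B, greedy F σ p := by
    rw [hT, Finset.sum_image (fun x _ y _ h => σ.symm.injective h)]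
    simp
  rw [← hsum]
  have : ∀ a ∈ T, greedy F σ (σ a) = F (pref σ ((a:ℕ)+1)) - F (pref σ (a:ℕ)) :=
    fun a _ => greedy_apply F σ a
  rw [Finset.sum_congr rfl this, hTinit]
  calc ∑ a ∈ Finset.univ.filter (fun a : Fin n => (a:ℕ) < B.card),
        (F (pref σ ((a:ℕ)+1)) - F (pref σ (a:ℕ)))
      = ∑ a : Fin n, (if (a:ℕ) < B.card then F (pref σ ((a:ℕ)+1)) - F (pref σ (a:ℕ)) else 0) :=
        (Finset.sum_filter _ _)
    _ = ∑ j ∈ Finset.range n, (if j < B.card then F (pref σ (j+1)) - F (pref σ j) else 0) :=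
        Fin.sum_univ_eq_sum_range (fun j => if j < B.card then F (pref σ (j+1)) - F (pref σ j) else 0) n
    _ = ∑ j ∈ Finset.range B.card, (F (pref σ (j+1)) - F (pref σ j)) := by
        rw [← Finset.sum_filter]
        congr 1
        ext j
        simp only [Finset.mem_filter, Finset.mem_range]
        omega
    _ = F (pref σ B.card) - F (pref σ 0) := Finset.sum_range_sub (fun j => F (pref σ j)) B.card
    _ = F B := by rw [pref_zero, hF0, ← hBpref]; ring

lemma greedy_sum_univ {n : ℕ} (F : Finset (Fin n) → ℝ) (hF0 : F ∅ = 0) (w : Fin n → ℝ) :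
    ∑ p : Fin n, greedy F (Tuple.sort (fun i => -w i)) p = F Finset.univ := by
  have := greedy_sum_sep F hF0 w Finset.univ (fun p _ q hq => absurd (Finset.mem_univ q) hq)
  simpa using this

lemma greedy_dot {n : ℕ} (F : Finset (Fin n) → ℝ) (w : Fin n → ℝ) :
    ∑ p : Fin n, w p * greedy F (Tuple.sort (fun i => -w i)) p = lovasz F w := by
  set σ := Tuple.sort (fun i => -w i)
  show _ = ∑ k : Fin n, w (σ k) * (F ((Finset.Iic k).image σ) - F ((Finset.Iio k).image σ))
  rw [← Equiv.sum_comp σ (fun p => w p * greedy F σ p)]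
  congr 1
  ext a
  rw [greedy_apply, Iic_image, Iio_image]

/-- prefix unions indexed by natural numbers -/
def prefB {n m : ℕ} (A : Fin m → Finset (Fin n)) (j : ℕ) : Finset (Fin n) :=
  (Finset.univ.filter (fun i : Fin m => (i:ℕ) < j)).biUnion A

lemma prefB_zero {n m : ℕ} (A : Fin m → Finset (Fin n)) : prefB A 0 = ∅ := by
  simp [prefB]

lemma prefB_top {n m : ℕ} (A : Fin m → Finset (Fin n))
    (hcov : Finset.univ.biUnion A = Finset.univ) : prefB A m = Finset.univ := by
  have : Finset.univ.filter (fun i : Fin m => (i:ℕ) < m) = Finset.univ :=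
    Finset.filter_true_of_mem (fun i _ => i.isLt)
  rw [prefB, this, hcov]

lemma prefB_eq {n m : ℕ} (A : Fin m → Finset (Fin n)) (i : Fin m) :
    prefB A ((i:ℕ)+1) = prefixUnion A i := by
  rw [prefB, prefixUnion]
  congr 1
  ext x
  simp only [Finset.mem_filter, Finset.mem_univ, true_and, Finset.mem_Iic, Nat.lt_succ_iff]
  exact Fin.le_def.symm

lemma prefB_succ {n m : ℕ} (A : Fin m → Finset (Fin n)) (i : Fin m) :
    prefB A ((i:ℕ)+1) = prefB A (i:ℕ) ∪ A i := by
  rw [prefB, prefB]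
  have : Finset.univ.filter (fun j : Fin m => (j:ℕ) < (i:ℕ)+1) =
      insert i (Finset.univ.filter (fun j : Fin m => (j:ℕ) < (i:ℕ))) := by
    ext x
    simp only [Finset.mem_filter, Finset.mem_univ, true_and, Finset.mem_insert, Nat.lt_succ_iff]
    constructor
    · intro h
      rcases eq_or_lt_of_le h with h | h
      · exact Or.inl (Fin.ext h)
      · exact Or.inr h
    · rintro (rfl | h)
      · exact le_refl _
      · exact le_of_lt h
  rw [this, Finset.biUnion_insert, Finset.union_comm]

lemma prefB_disj {n m : ℕ} {A : Fin m → Finset (Fin n)}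
    (hdisj : ∀ i j, i ≠ j → Disjoint (A i) (A j)) (i : Fin m) :
    Disjoint (prefB A (i:ℕ)) (A i) := by
  rw [Finset.disjoint_left]
  intro x hx hxi
  rw [prefB, Finset.mem_biUnion] at hx
  obtain ⟨l, hl, hxl⟩ := hx
  rw [Finset.mem_filter] at hl
  have hne : l ≠ i := fun h => by simp [h] at hl
  exact Finset.disjoint_left.mp (hdisj l i hne) hxl hxi

lemma sum_ite_part {n m : ℕ} {A : Fin m → Finset (Fin n)}
    (hdisj : ∀ i j, i ≠ j → Disjoint (A i) (A j)) (v : Fin m → ℝ) {p : Fin n} {i : Fin m}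
    (hp : p ∈ A i) : (∑ j, if p ∈ A j then v j else 0) = v i := by
  rw [Finset.sum_eq_single i]
  · rw [if_pos hp]
  · intro b _ hb
    rw [if_neg (fun hpb => Finset.disjoint_left.mp (hdisj b i hb) hpb hp)]
  · intro h
    exact absurd (Finset.mem_univ i) h

lemma mem_prefixUnion_iff {n m : ℕ} {A : Fin m → Finset (Fin n)}
    (hdisj : ∀ i j, i ≠ j → Disjoint (A i) (A j)) {p : Fin n} {i k : Fin m}
    (hp : p ∈ A i) : p ∈ prefixUnion A k ↔ i ≤ k := by
  simp only [prefixUnion, Finset.mem_biUnion, Finset.mem_Iic]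
  constructor
  · rintro ⟨l, hlk, hpl⟩
    rcases eq_or_ne l i with rfl | hne
    · exact hlk
    · exact (Finset.disjoint_left.mp (hdisj l i hne) hpl hp).elim
  · intro h
    exact ⟨i, h, hp⟩

lemma unbdd {n m : ℕ} (F : Finset (Fin n) → ℝ) (hF : Submodular F) (hF0 : F ∅ = 0)
    (A : Fin m → Finset (Fin n)) (w : Fin n → ℝ) (p q : Fin n) (hpq : w q < w p)
    (hmem : ∀ k : Fin m, p ∈ prefixUnion A k → q ∈ prefixUnion A k) :
    ¬ BddAbove ((fun s : Fin n → ℝ => ∑ i, w i * s i) '' tangentCone F A) := by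
  rintro ⟨M, hM⟩
  set σ := Tuple.sort (fun i => -w i) with hσ
  set s0 := greedy F σ with hs0
  have hc : s0 ∈ tangentCone F A :=
    ⟨greedy_sum_univ F hF0 w, fun i _ => greedy_sum_le hF hF0 σ _⟩
  set c := ∑ i, w i * s0 i with hcdef
  set δ := w p - w q with hδdef
  have hδ : 0 < δ := by rw [hδdef]; linarith
  set t := max 0 ((M - c)/δ + 1) with ht
  have ht0 : (0:ℝ) ≤ t := le_max_left _ _
  set s1 := fun r => s0 r + t * ((if r = p then (1:ℝ) else 0) - (if r = q then 1 else 0))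
    with hs1def
  have hs1 : s1 ∈ tangentCone F A := by
    constructor
    · rw [hs1def]
      rw [Finset.sum_add_distrib, hc.1, ← Finset.mul_sum, Finset.sum_sub_distrib]
      simp [Finset.sum_ite_eq']
    · intro k hk
      have h0 := hc.2 k hk
      have hsum : ∑ r ∈ prefixUnion A k, s1 r = (∑ r ∈ prefixUnion A k, s0 r) +
          t * ((if p ∈ prefixUnion A k then (1:ℝ) else 0) -
               (if q ∈ prefixUnion A k then 1 else 0)) := by
        rw [hs1def, Finset.sum_add_distrib, ← Finset.mul_sum, Finset.sum_sub_distrib,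
          Finset.sum_ite_eq' (prefixUnion A k) p (fun _ => (1:ℝ)),
          Finset.sum_ite_eq' (prefixUnion A k) q (fun _ => (1:ℝ))]
      have hind : (if p ∈ prefixUnion A k then (1:ℝ) else 0) -
          (if q ∈ prefixUnion A k then 1 else 0) ≤ 0 := by
        by_cases hp : p ∈ prefixUnion A k
        · rw [if_pos hp, if_pos (hmem k hp)]; norm_num
        · rw [if_neg hp]; split_ifs <;> norm_num
      have := mul_nonpos_of_nonneg_of_nonpos ht0 hind
      rw [hsum]
      linarith
  have hle : ∑ i, w i * s1 i ≤ M := hM ⟨s1, hs1, rfl⟩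
  have hval : ∑ i, w i * s1 i = c + t * δ := by
    have hterm : ∀ r : Fin n, w r * s1 r = w r * s0 r +
        t * ((if r = p then w r else 0) - (if r = q then w r else 0)) := by
      intro r
      simp only [hs1def]
      split_ifs <;> ring
    rw [Finset.sum_congr rfl (fun r _ => hterm r), Finset.sum_add_distrib, ← Finset.mul_sum,
      Finset.sum_sub_distrib, Finset.sum_ite_eq' Finset.univ p w,
      Finset.sum_ite_eq' Finset.univ q w]
    simp [hδdef]
    exact hcdef.symm
  have h1 : (M - c)/δ < t := lt_of_lt_of_le (lt_add_one _) (le_max_right _ _)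
  have h2 : M - c < t * δ := (div_lt_iff₀ hδ).mp h1
  linarith

/-- The support function of the tangent cone of an ordered partition equals the Lovász
extension on compatible vectors, and is `+∞` (unbounded) otherwise. -/
theorem suppFunction_tangentCone {n m : ℕ} (F : Finset (Fin n) → ℝ)
    (hF : Submodular F) (hF0 : F ∅ = 0)
    (A : Fin m → Finset (Fin n)) (hA : IsOrderedPartition A) (w : Fin n → ℝ) :
    (w ∈ compatible A →
      sSup ((fun s : Fin n → ℝ => ∑ i, w i * s i) '' tangentCone F A) = lovasz F w) ∧
    (w ∉ compatible A →
      ¬ BddAbove ((fun s : Fin n → ℝ => ∑ i, w i * s i) '' tangentCone F A)) := by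
  obtain ⟨hAne, hdisj, hcov⟩ := hA
  have hcov' : ∀ r : Fin n, ∃ i, r ∈ A i := by
    intro r
    have : r ∈ Finset.univ.biUnion A := hcov ▸ Finset.mem_univ r
    rw [Finset.mem_biUnion] at this
    obtain ⟨i, -, hi⟩ := this
    exact ⟨i, hi⟩
  constructor
  · -- compatible case
    rintro ⟨v, hv, hwv⟩
    set σ := Tuple.sort (fun i => -w i) with hσ
    set gr := greedy F σ with hgr
    have hgrcone : gr ∈ tangentCone F A :=
      ⟨greedy_sum_univ F hF0 w, fun i _ => greedy_sum_le hF hF0 σ _⟩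
    apply IsGreatest.csSup_eq
    constructor
    · exact ⟨gr, hgrcone, greedy_dot F w⟩
    · rintro x ⟨s, hs, rfl⟩
      -- show ∑ w s ≤ lovasz F w
      have hdot : ∑ p, w p * gr p = lovasz F w := greedy_dot F w
      set d := fun p => s p - gr p with hd
      set E : ℕ → ℝ := fun j => ∑ p ∈ prefB A j, d p with hE
      set V : ℕ → ℝ := fun j => if h : j < m then v ⟨j, h⟩ else 0 with hV
      have hE0 : E 0 = 0 := by simp [hE, prefB_zero]
      have hEm : E m = 0 := by
        rw [hE]
        simp only [prefB_top A hcov]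
        rw [hd]
        rw [Finset.sum_sub_distrib, hs.1, greedy_sum_univ F hF0 w]
        ring
      have step1 : (∑ p, w p * s p) - (∑ p, w p * gr p) =
          ∑ i : Fin m, v i * (∑ p ∈ A i, d p) := by
        rw [← Finset.sum_sub_distrib]
        calc ∑ p, (w p * s p - w p * gr p) = ∑ p, w p * d p := by
              apply Finset.sum_congr rfl
              intro p _
              rw [hd]; ring
          _ = ∑ p, ∑ i : Fin m, (if p ∈ A i then v i * d p else 0) := by
              apply Finset.sum_congr rfl
              intro p _
              simp only [hwv, Finset.sum_mul, ite_mul, zero_mul]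
          _ = ∑ i : Fin m, ∑ p, (if p ∈ A i then v i * d p else 0) := Finset.sum_comm
          _ = ∑ i : Fin m, v i * (∑ p ∈ A i, d p) := by
              apply Finset.sum_congr rfl
              intro i _
              rw [Finset.sum_ite_mem, Finset.univ_inter, Finset.mul_sum]
      have step2 : ∑ i : Fin m, v i * (∑ p ∈ A i, d p) =
          ∑ j ∈ Finset.range m, V j * (E (j+1) - E j) := by
        rw [← Fin.sum_univ_eq_sum_range (fun j => V j * (E (j+1) - E j)) m]
        apply Finset.sum_congr rfl
        intro i _
        have h1 : V (i:ℕ) = v i := by rw [hV]; simp [i.isLt]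
        have h2 : E ((i:ℕ)+1) - E (i:ℕ) = ∑ p ∈ A i, d p := by
          rw [hE]
          simp only
          rw [prefB_succ A i, Finset.sum_union (prefB_disj hdisj i)]
          ring
        rw [h1, h2]
      have key : ∀ j ∈ Finset.range m, (V j - V (j+1)) * E (j+1) ≤ 0 := by
        intro j hj
        rw [Finset.mem_range] at hj
        by_cases hjm : j + 1 = m
        · rw [hjm, hEm, mul_zero]
        · have hj1 : j + 1 < m := lt_of_le_of_ne hj hjm
          have hVj : V j = v ⟨j, hj⟩ := dif_pos hj
          have hVj1 : V (j+1) = v ⟨j+1, hj1⟩ := dif_pos hj1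
          have hle : v ⟨j+1, hj1⟩ ≤ v ⟨j, hj⟩ := by
            apply hv
            rw [Fin.le_def]
            exact Nat.le_succ j
          by_cases hveq : v ⟨j, hj⟩ = v ⟨j+1, hj1⟩
          · rw [hVj, hVj1, hveq, sub_self, zero_mul]
          · apply mul_nonpos_of_nonneg_of_nonpos
            · rw [hVj, hVj1]; linarith
            · -- E (j+1) ≤ 0
              have hpb : prefB A (j+1) = prefixUnion A ⟨j, hj⟩ := prefB_eq A ⟨j, hj⟩
              have hlt : (⟨j, hj⟩ : Fin m).val < m - 1 := by show j < m - 1; omega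
              have hsle : ∑ p ∈ prefixUnion A ⟨j, hj⟩, s p ≤ F (prefixUnion A ⟨j, hj⟩) :=
                hs.2 ⟨j, hj⟩ hlt
              have hstrict : v ⟨j+1, hj1⟩ < v ⟨j, hj⟩ :=
                lt_of_le_of_ne hle (fun h => hveq h.symm)
              have hsep : ∀ p ∈ prefixUnion A ⟨j, hj⟩, ∀ q ∉ prefixUnion A ⟨j, hj⟩,
                  w q < w p := by
                intro p hp q hq
                obtain ⟨lp, hlp, hplp⟩ := Finset.mem_biUnion.mp hp
                rw [Finset.mem_Iic] at hlp
                obtain ⟨lq, hqlq⟩ := hcov' q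
                have hlq : ¬ lq ≤ ⟨j, hj⟩ := by
                  intro hle'
                  exact hq (Finset.mem_biUnion.mpr ⟨lq, Finset.mem_Iic.mpr hle', hqlq⟩)
                have hlq' : (⟨j+1, hj1⟩ : Fin m) ≤ lq := by
                  rw [Fin.le_def, not_le] at hlq
                  have hlq2 : j < (lq : ℕ) := hlq
                  show j + 1 ≤ (lq : ℕ)
                  omega
                have hwp : w p = v lp := by rw [hwv]; exact sum_ite_part hdisj v hplp
                have hwq : w q = v lq := by rw [hwv]; exact sum_ite_part hdisj v hqlq
                have h1 : v lq ≤ v ⟨j+1, hj1⟩ := hv _ _ hlq'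
                have h2 : v ⟨j, hj⟩ ≤ v lp := hv _ _ hlp
                rw [hwp, hwq]
                linarith
              have hgreq : ∑ p ∈ prefixUnion A ⟨j, hj⟩, gr p = F (prefixUnion A ⟨j, hj⟩) := by
                rw [hgr, hσ]
                exact greedy_sum_sep F hF0 w _ hsep
              rw [hE]
              simp only [hpb]
              rw [hd, Finset.sum_sub_distrib, hgreq]
              linarith
      have step3 : ∑ j ∈ Finset.range m, V j * (E (j+1) - E j) ≤ 0 := by
        have hsplit : ∑ j ∈ Finset.range m, V j * (E (j+1) - E j) =
            (∑ j ∈ Finset.range m, (V j - V (j+1)) * E (j+1)) +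
            (∑ j ∈ Finset.range m, (V (j+1) * E (j+1) - V j * E j)) := by
          rw [← Finset.sum_add_distrib]
          apply Finset.sum_congr rfl
          intro j _
          ring
        rw [hsplit, Finset.sum_range_sub (fun j => V j * E j) m, hE0, hEm]
        have := Finset.sum_nonpos key
        simp only [mul_zero, sub_zero]
        linarith [Finset.sum_nonpos key]
      rw [← hdot]
      have := step1.trans step2
      linarith
  · -- incompatible case
    intro hnc
    by_cases hconst : ∀ i : Fin m, ∀ x ∈ A i, ∀ y ∈ A i, w x = w y
    · set v : Fin m → ℝ := fun i => w (hAne i).choose with hvdef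
      by_cases hmono : ∀ i j : Fin m, i ≤ j → v j ≤ v i
      · exfalso
        apply hnc
        refine ⟨v, hmono, funext fun r => ?_⟩
        obtain ⟨i, hi⟩ := hcov' r
        calc w r = v i := hconst i r hi _ (hAne i).choose_spec
          _ = ∑ j, if r ∈ A j then v j else 0 := (sum_ite_part hdisj v hi).symm
      · push_neg at hmono
        obtain ⟨i, j, hij, hvij⟩ := hmono
        apply unbdd F hF hF0 A w (hAne j).choose (hAne i).choose hvij
        intro k hk
        rw [mem_prefixUnion_iff hdisj (hAne j).choose_spec] at hk
        exact (mem_prefixUnion_iff hdisj (hAne i).choose_spec).mpr (le_trans hij hk)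
    · push_neg at hconst
      obtain ⟨i, x, hx, y, hy, hxy⟩ := hconst
      rcases lt_or_gt_of_ne hxy with h | h
      · apply unbdd F hF hF0 A w y x h
        intro k hk
        rw [mem_prefixUnion_iff hdisj hy] at hk
        exact (mem_prefixUnion_iff hdisj hx).mpr hk
      · apply unbdd F hF hF0 A w x y h
        intro k hk
        rw [mem_prefixUnion_iff hdisj hx] at hk
        exact (mem_prefixUnion_iff hdisj hy).mpr hk
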